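/- Let S be a finitely generated, cancellative, reduced commutative monoid minimally generated by A. An element a ∈ S is a minimal Betti element (minimal among Betti elements with respect to ≺_S) if and only if φ_A^{-1}(a) has more than one R-class and every R-class of φ_A^{-1}(a) is a singleton. -/

import Mathlib

open Finset

variable {M : Type*} [AddCommMonoid M] {r : ℕ}

/-- The factorization homomorphism associated to the generating tuple `A`. -/
def phi (A : Fin r → M) (u : Fin r → ℕ) : M := ∑ i, u i • A i

/-- One step of the relation `R`: two factorizations of `a` with nonzero dot product. -/
def step (A : Fin r → M) (a : M) (u v : Fin r → ℕ) : Prop :=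
  phi A u = a ∧ phi A v = a ∧ (∑ i, u i * v i) ≠ 0

/-- The relation `R` on the fiber of `a`: connected by a chain of factorizations with
consecutive nonzero dot products. -/
def Rrel (A : Fin r → M) (a : M) : (Fin r → ℕ) → (Fin r → ℕ) → Prop :=
  Relation.ReflTransGen (step A a)

/-- `a` is a Betti element: its fiber has more than one `R`-class. -/
def IsBetti (A : Fin r → M) (a : M) : Prop :=
  ∃ u v : Fin r → ℕ, phi A u = a ∧ phi A v = a ∧ ¬ Rrel A a u v

/-- `a` is Betti-minimal: a Betti element minimal with respect to `b ≺ a ↔ a - b ∈ S`. -/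
def BettiMinimal (A : Fin r → M) (a : M) : Prop :=
  IsBetti A a ∧ ∀ b : M, IsBetti A b → (∃ c : M, a = b + c) → b = a

/-- `a` has a unique presentation: exactly two factorizations, with disjoint support. -/
def HasUniquePres (A : Fin r → M) (a : M) : Prop :=
  ∃ u v : Fin r → ℕ, u ≠ v ∧ {w : Fin r → ℕ | phi A w = a} = {u, v} ∧
    (∑ i, u i * v i) = 0

/-- The monoid generated by `A` is uniquely presented: every Betti element has exactly two
factorizations, with disjoint support. -/
def UniquelyPresented (A : Fin r → M) : Prop :=
  ∀ a : M, IsBetti A a → HasUniquePres A a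

/- ### Auxiliary lemmas -/

lemma phi_add' (A : Fin r → M) (u v : Fin r → ℕ) : phi A (u + v) = phi A u + phi A v := by
  simp [phi, add_nsmul, Finset.sum_add_distrib]

lemma red_sum' {ι N : Type*} [AddCommMonoid N] (hred : ∀ x y : N, x + y = 0 → x = 0)
    (s : Finset ι) (f : ι → N) (h : ∑ i ∈ s, f i = 0) : ∀ i ∈ s, f i = 0 := by
  induction s using Finset.cons_induction with
  | empty => simp
  | cons a s ha ih =>
    rw [Finset.sum_cons] at h
    have h1 : f a = 0 := hred _ _ h
    have h2 : ∑ i ∈ s, f i = 0 := hred _ _ (by rw [add_comm]; exact h)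
    intro i hi
    rcases Finset.mem_cons.mp hi with rfl | hi
    · exact h1
    · exact ih h2 i hi

lemma A_ne_zero' (A : Fin r → M)
    (hmin : ∀ i : Fin r, ¬ ∃ u : Fin r → ℕ, u i = 0 ∧ phi A u = A i) (i : Fin r) :
    A i ≠ 0 := by
  intro h0
  exact hmin i ⟨0, rfl, by simp [phi, h0]⟩

lemma phi_eq_zero' (A : Fin r → M) (hred : ∀ x y : M, x + y = 0 → x = 0)
    (hmin : ∀ i : Fin r, ¬ ∃ u : Fin r → ℕ, u i = 0 ∧ phi A u = A i)
    {u : Fin r → ℕ} (h : phi A u = 0) : u = 0 := by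
  have hterm : ∀ i ∈ Finset.univ, u i • A i = 0 := red_sum' hred _ _ h
  funext i
  by_contra hi
  obtain ⟨k, hk⟩ := Nat.exists_eq_succ_of_ne_zero hi
  have hz := hterm i (Finset.mem_univ i)
  rw [hk, succ_nsmul] at hz
  exact A_ne_zero' A hmin i (hred _ _ (by rw [add_comm]; exact hz))

lemma exists_distinct_step' {α : Type*} {rel : α → α → Prop} {u v : α}
    (h : Relation.ReflTransGen rel u v) : u ≠ v → ∃ x y, rel x y ∧ x ≠ y := by
  induction h with
  | refl => exact fun h => absurd rfl h
  | @tail m c h1 h2 ih =>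
    intro _
    by_cases hmc : m = c
    · subst hmc
      exact ih (by rename_i huv; exact fun h => huv h)
    · exact ⟨m, c, h2, hmc⟩

section Cancel

variable {M : Type*} [AddCancelCommMonoid M] {r : ℕ}

lemma fiber_mono' (A : Fin r → M) (hred : ∀ x y : M, x + y = 0 → x = 0)
    (hmin : ∀ i : Fin r, ¬ ∃ u : Fin r → ℕ, u i = 0 ∧ phi A u = A i)
    {a : M} {u v : Fin r → ℕ} (hu : phi A u = a) (hv : phi A v = a) (hle : u ≤ v) :
    u = v := by
  have hsplit : v = u + (v - u) := by
    funext i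
    exact (Nat.add_sub_cancel' (hle i)).symm
  have h : phi A u + phi A (v - u) = phi A u + 0 := by
    rw [← phi_add', ← hsplit, hv, hu, add_zero]
  have h0 : phi A (v - u) = 0 := add_left_cancel h
  rw [hsplit, phi_eq_zero' A hred hmin h0, add_zero]

lemma fiber_finite' (A : Fin r → M) (hred : ∀ x y : M, x + y = 0 → x = 0)
    (hmin : ∀ i : Fin r, ¬ ∃ u : Fin r → ℕ, u i = 0 ∧ phi A u = A i) (a : M) :
    {u : Fin r → ℕ | phi A u = a}.Finite := by
  by_contra h
  have hinf : {u : Fin r → ℕ | phi A u = a}.Infinite := h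
  obtain f := hinf.natEmbedding
  have hPWO : ({u : Fin r → ℕ | phi A u = a}).IsPWO :=
    Set.isPWO_of_wellQuasiOrderedLE _
  obtain ⟨m, n, hmn, hle⟩ := hPWO.exists_lt (f := fun n => (f n : Fin r → ℕ)) (fun n => (f n).2)
  have h2 : (f m : Fin r → ℕ) = f n := fiber_mono' A hred hmin (f m).2 (f n).2 hle
  exact absurd (f.injective (Subtype.ext h2)) (Nat.ne_of_lt hmn)

lemma key' (A : Fin r → M) (hred : ∀ x y : M, x + y = 0 → x = 0)
    (hmin : ∀ i : Fin r, ¬ ∃ u : Fin r → ℕ, u i = 0 ∧ phi A u = A i)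
    {a : M} (hBM : BettiMinimal A a) {u v : Fin r → ℕ}
    (hu : phi A u = a) (hv : phi A v = a) (hne : u ≠ v) :
    (∑ i, u i * v i) = 0 := by
  by_contra hdot
  set P : Set ((Fin r → ℕ) × (Fin r → ℕ)) :=
    {p | phi A p.1 = a ∧ phi A p.2 = a ∧ p.1 ≠ p.2 ∧ (∑ i, p.1 i * p.2 i) ≠ 0} with hP
  have hPfin : P.Finite := by
    apply Set.Finite.subset
      (Set.Finite.prod (fiber_finite' A hred hmin a) (fiber_finite' A hred hmin a))
    rintro ⟨x, y⟩ ⟨h1, h2, -, -⟩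
    exact ⟨h1, h2⟩
  have hPne : P.Nonempty := ⟨(u, v), hu, hv, hne, hdot⟩
  obtain ⟨⟨x, y⟩, hp, hmax⟩ : ∃ p ∈ P, ∀ q ∈ P, (fun p : (Fin r → ℕ) × (Fin r → ℕ) =>
      ∑ i, min (p.1 i) (p.2 i)) p ≤ (fun p : (Fin r → ℕ) × (Fin r → ℕ) =>
      ∑ i, min (p.1 i) (p.2 i)) q → (fun p : (Fin r → ℕ) × (Fin r → ℕ) =>
      ∑ i, min (p.1 i) (p.2 i)) p = (fun p : (Fin r → ℕ) × (Fin r → ℕ) =>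
      ∑ i, min (p.1 i) (p.2 i)) q := by
    obtain ⟨p, hp, hm⟩ := Set.Finite.exists_maximalFor (fun p => ∑ i, min (p.1 i) (p.2 i)) P hPfin hPne
    exact ⟨p, hp, fun q hq h => le_antisymm h (hm hq h)⟩
  obtain ⟨hp1, hp2, hp3, hp4⟩ := hp
  simp only at hp1 hp2 hp3 hp4
  set w : Fin r → ℕ := fun i => min (x i) (y i) with hw
  set x' : Fin r → ℕ := fun i => x i - w i with hx'
  set y' : Fin r → ℕ := fun i => y i - w i with hy'
  have hxw : x' + w = x := funext fun i => Nat.sub_add_cancel (min_le_left _ _)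
  have hyw : y' + w = y := funext fun i => Nat.sub_add_cancel (min_le_right _ _)
  have hbx : phi A x' + phi A w = a := by rw [← phi_add', hxw, hp1]
  have hby : phi A y' + phi A w = a := by rw [← phi_add', hyw, hp2]
  have hy'b : phi A y' = phi A x' := add_right_cancel (hby.trans hbx.symm)
  obtain ⟨j, -, hj⟩ := Finset.exists_ne_zero_of_sum_ne_zero hp4
  have hwj : w j ≠ 0 := by
    rcases Nat.mul_ne_zero_iff.mp hj with ⟨h1, h2⟩
    simp only [hw]
    omega
  have hwne : w ≠ 0 := fun h => hwj (congrFun h j)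
  have hx'y' : x' ≠ y' := fun h => hp3 (by rw [← hxw, ← hyw, h])
  by_cases hb : IsBetti A (phi A x')
  · have hba : phi A x' = a := hBM.2 _ hb ⟨phi A w, hbx.symm⟩
    rw [hba] at hbx
    have h0 : phi A w = 0 := by
      have h' : a + phi A w = a + 0 := by rw [add_zero]; exact hbx
      exact add_left_cancel h'
    exact hwne (phi_eq_zero' A hred hmin h0)
  · have hR : Rrel A (phi A x') x' y' := by
      by_contra hnR
      exact hb ⟨x', y', rfl, hy'b, hnR⟩
    obtain ⟨s, t, hst, hstne⟩ := exists_distinct_step' hR hx'y'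
    obtain ⟨hs, ht, hdst⟩ := hst
    obtain ⟨k, -, hk⟩ := Finset.exists_ne_zero_of_sum_ne_zero hdst
    rcases Nat.mul_ne_zero_iff.mp hk with ⟨hk1, hk2⟩
    have hq : (s + w, t + w) ∈ P := by
      refine ⟨?_, ?_, ?_, ?_⟩
      · show phi A (s + w) = a
        rw [phi_add', hs]; exact hbx
      · show phi A (t + w) = a
        rw [phi_add', ht]; exact hbx
      · show s + w ≠ t + w
        intro h
        apply hstne
        funext i
        have := congrFun h i
        simp only [Pi.add_apply] at this
        omega
      · show (∑ i, (s + w) i * (t + w) i) ≠ 0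
        intro h0
        have hterm := (Finset.sum_eq_zero_iff).mp h0 k (Finset.mem_univ k)
        simp only [Pi.add_apply] at hterm
        rcases Nat.mul_eq_zero.mp hterm with h' | h' <;> omega
    have hsum : (∑ i, min ((s + w) i) ((t + w) i))
        = (∑ i, min (s i) (t i)) + ∑ i, w i := by
      rw [← Finset.sum_add_distrib]
      refine Finset.sum_congr rfl fun i _ => ?_
      simp only [Pi.add_apply]
      omega
    have hpos : 0 < ∑ i, min (s i) (t i) := by
      have h1 : 0 < min (s k) (t k) := by omega
      exact lt_of_lt_of_le h1
        (Finset.single_le_sum (f := fun i => min (s i) (t i)) (fun i _ => Nat.zero_le _) (Finset.mem_univ k))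
    have hlt : (∑ i, min (x i) (y i)) < ∑ i, min ((s + w) i) ((t + w) i) := by
      have hxy : (∑ i, min (x i) (y i)) = ∑ i, w i := rfl
      omega
    exact absurd (hmax _ hq (le_of_lt hlt)) (ne_of_lt hlt)

end Cancel

/-- `a` is Betti-minimal iff its fiber has more than one `R`-class and every `R`-class
is a singleton. -/
theorem stmt1 {M : Type*} [AddCancelCommMonoid M] {r : ℕ} (A : Fin r → M)
    (hred : ∀ x y : M, x + y = 0 → x = 0)
    (hgen : ∀ s : M, ∃ u : Fin r → ℕ, phi A u = s)
    (hmin : ∀ i : Fin r, ¬ ∃ u : Fin r → ℕ, u i = 0 ∧ phi A u = A i)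
    (a : M) :
    BettiMinimal A a ↔
      (IsBetti A a ∧
        ∀ u v : Fin r → ℕ, phi A u = a → phi A v = a → Rrel A a u v → u = v) := by
  constructor
  · intro hBM
    refine ⟨hBM.1, ?_⟩
    intro u v hu hv hR
    by_contra hne
    obtain ⟨x, y, hst, hxyne⟩ := exists_distinct_step' hR hne
    exact hst.2.2 (key' A hred hmin hBM hst.1 hst.2.1 hxyne)
  · rintro ⟨hB, hs⟩
    refine ⟨hB, ?_⟩
    rintro b hbB ⟨c, hc⟩
    obtain ⟨u, v, hu, hv, hnR⟩ := hbB
    obtain ⟨w, hw⟩ := hgen c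
    by_cases hw0 : w = 0
    · have hc0 : c = 0 := by rw [← hw, hw0, phi, Finset.sum_eq_zero]; intro i _; simp
      rw [hc, hc0, add_zero]
    · exfalso
      have huw : phi A (u + w) = a := by rw [phi_add', hu, hw, hc]
      have hvw : phi A (v + w) = a := by rw [phi_add', hv, hw, hc]
      have hdot : (∑ i, (u + w) i * (v + w) i) ≠ 0 := by
        have ⟨j, hj⟩ : ∃ j, w j ≠ 0 := by
          by_contra hall
          push_neg at hall
          exact hw0 (funext hall)
        intro h0
        have hterm := (Finset.sum_eq_zero_iff).mp h0 j (Finset.mem_univ j)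
        simp only [Pi.add_apply] at hterm
        rcases Nat.mul_eq_zero.mp hterm with h' | h' <;> omega
      have heq : u + w = v + w :=
        hs _ _ huw hvw (Relation.ReflTransGen.single ⟨huw, hvw, hdot⟩)
      have huv : u = v := by
        funext i
        have := congrFun heq i
        simp only [Pi.add_apply] at this
        omega
      exact hnR (huv ▸ Relation.ReflTransGen.refl)
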